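/- Let $X \in \mathbb{R}^{2n\times 2n}$ be the block matrix $X = \begin{pmatrix} C & I_n \\ -C^2 + R & -C \end{pmatrix}$ where $C \in \mathbb{R}^{n\times n}$ is symmetric and $R \in \mathbb{R}^{n\times n}$ is arbitrary. Then for all $k \in \mathbb{N}$, $X^{2k} = \begin{pmatrix} R^k & 0 \\ R^k C - C R^k & R^k \end{pmatrix}$ and $X^{2k+1} = \begin{pmatrix} R^k C & R^k \\ R^{k+1} - C R^k C & -C R^k \end{pmatrix}$. -/
import Mathlib


open Matrix

private lemma fb_congr {n : ℕ} {A B C D A' B' C' D' : Matrix (Fin n) (Fin n) ℝ}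
    (hA : A = A') (hB : B = B') (hC : C = C') (hD : D = D') :
    Matrix.fromBlocks A B C D = Matrix.fromBlocks A' B' C' D' := by
  rw [hA, hB, hC, hD]

theorem stmt0 (n : ℕ) (C R : Matrix (Fin n) (Fin n) ℝ) (hC : Cᵀ = C)
    (X : Matrix (Fin n ⊕ Fin n) (Fin n ⊕ Fin n) ℝ)
    (hX : X = Matrix.fromBlocks C 1 (-(C * C) + R) (-C)) :
    ∀ k : ℕ,
      X ^ (2 * k) = Matrix.fromBlocks (R ^ k) 0 (R ^ k * C - C * R ^ k) (R ^ k) ∧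
      X ^ (2 * k + 1) =
        Matrix.fromBlocks (R ^ k * C) (R ^ k) (R ^ (k + 1) - C * R ^ k * C) (-(C * R ^ k)) := by
  intro k
  induction k with
  | zero =>
    refine ⟨by simp [Matrix.fromBlocks_one], ?_⟩
    rw [pow_one, hX]
    exact fb_congr (by noncomm_ring) (by noncomm_ring) (by noncomm_ring) (by noncomm_ring)
  | succ k ih =>
    obtain ⟨h1, h2⟩ := ih
    have key : X ^ (2 * (k + 1)) =
        Matrix.fromBlocks (R ^ (k+1)) 0 (R ^ (k+1) * C - C * R ^ (k+1)) (R ^ (k+1)) := by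
      have e : 2 * (k + 1) = (2 * k + 1) + 1 := by ring
      rw [e, pow_succ, h2, hX, Matrix.fromBlocks_multiply]
      exact fb_congr (by noncomm_ring) (by noncomm_ring) (by noncomm_ring) (by noncomm_ring)
    refine ⟨key, ?_⟩
    rw [pow_succ, key, hX, Matrix.fromBlocks_multiply]
    exact fb_congr (by noncomm_ring) (by noncomm_ring) (by noncomm_ring) (by noncomm_ring)
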